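/- Let 0 < q < 1, b > 0, n ∈ ℕ⁺, a = b q^n, and f : [a,b] → ℝ convex. Then f((a+b)/(1+q)) ≤ (1/(b−a))·G_q(f;a,b) ≤ (1/(1+q))·(q·f(a/q) + f(b)), where G_q(f;a,b) = b(1−q)∑_{k=0}^{n−1} f(b q^k) q^k. -/

import Mathlib

open scoped BigOperators
open Set

set_option maxHeartbeats 1000000 in
/-- q-Hermite–Hadamard inequality for the restricted q-integral. -/
theorem q_hermite_hadamard_Gq (q b : ℝ) (n : ℕ) (f : ℝ → ℝ) (a : ℝ)
    (hq0 : 0 < q) (hq1 : q < 1) (hb : 0 < b) (hn : 0 < n) (ha : a = b * q ^ n)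
    (hconv : ConvexOn ℝ (Icc a b) f) :
    f ((a + b) / (1 + q)) ≤
        (1 / (b - a)) * (b * (1 - q) * ∑ k ∈ Finset.range n, f (b * q ^ k) * q ^ k) ∧
      (1 / (b - a)) * (b * (1 - q) * ∑ k ∈ Finset.range n, f (b * q ^ k) * q ^ k) ≤
        (1 / (1 + q)) * (q * f (a / q) + f b) := by
  obtain ⟨m, rfl⟩ : ∃ m, n = m + 1 := ⟨n - 1, (Nat.succ_pred_eq_of_pos hn).symm⟩
  subst ha
  have hq1' : (0:ℝ) < 1 - q := by linarith
  have hqne : q - 1 ≠ 0 := by linarith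
  have hq2ne : q^2 - 1 ≠ 0 := by nlinarith
  have h1q : (0:ℝ) < 1 + q := by linarith
  have hqn : q ^ (m+1) < 1 := pow_lt_one₀ hq0.le hq1 (Nat.succ_ne_zero m)
  have hD : 0 < b - b * q ^ (m+1) := by nlinarith
  have hmem : ∀ k ∈ Finset.range (m+1), b * q ^ k ∈ Icc (b * q ^ (m+1)) b := by
    intro k hk
    have hk' : k ≤ m + 1 := le_of_lt (Finset.mem_range.mp hk)
    refine ⟨mul_le_mul_of_nonneg_left (pow_le_pow_of_le_one hq0.le hq1.le hk') hb.le, ?_⟩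
    nlinarith [(pow_le_one₀ hq0.le hq1.le : q ^ k ≤ 1), pow_nonneg hq0.le k]
  have hS1 : ∑ k ∈ Finset.range (m+1), q ^ k = (q ^ (m+1) - 1) / (q - 1) :=
    geom_sum_eq (by linarith) _
  have hS2 : ∑ k ∈ Finset.range (m+1), (q^2) ^ k = ((q^2) ^ (m+1) - 1) / (q^2 - 1) :=
    geom_sum_eq (by intro h; exact hq2ne (by linarith [h]); ) _
  constructor
  · -- left inequality via Jensen
    have jensen := hconv.map_sum_le (t := Finset.range (m+1))
      (w := fun k => b * (1 - q) * q ^ k / (b - b * q ^ (m+1)))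
      (p := fun k => b * q ^ k)
      (fun k _ => by positivity)
      (by
        have : ∀ k ∈ Finset.range (m+1),
            b * (1 - q) * q ^ k / (b - b * q ^ (m+1))
              = (b * (1 - q) / (b - b * q ^ (m+1))) * q ^ k := fun k _ => by ring
        rw [Finset.sum_congr rfl this, ← Finset.mul_sum, hS1]
        rw [div_mul_div_comm, div_eq_one_iff_eq (mul_ne_zero hD.ne' hqne)]
        ring)
      hmem
    have hbary : ∑ k ∈ Finset.range (m+1),
        (b * (1 - q) * q ^ k / (b - b * q ^ (m+1))) • (b * q ^ k)
          = (b * q ^ (m+1) + b) / (1 + q) := by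
      have h1 : ∀ k ∈ Finset.range (m+1),
          (b * (1 - q) * q ^ k / (b - b * q ^ (m+1))) • (b * q ^ k)
            = (b * b * (1 - q) / (b - b * q ^ (m+1))) * (q^2) ^ k := by
        intro k _
        have : (q^2) ^ k = q ^ k * q ^ k := by
          rw [pow_right_comm]; ring
        rw [smul_eq_mul, this]; ring
      rw [Finset.sum_congr rfl h1, ← Finset.mul_sum, hS2]
      have h2 : (q^2) ^ (m+1) = q ^ (m+1) * q ^ (m+1) := by rw [pow_right_comm]; ring
      rw [h2]
      rw [div_mul_div_comm, div_eq_div_iff (mul_ne_zero hD.ne' hq2ne) h1q.ne']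
      ring
    have hval : ∑ k ∈ Finset.range (m+1),
        (b * (1 - q) * q ^ k / (b - b * q ^ (m+1))) • f (b * q ^ k)
          = (1 / (b - b * q ^ (m+1))) * (b * (1 - q) *
              ∑ k ∈ Finset.range (m+1), f (b * q ^ k) * q ^ k) := by
      rw [Finset.mul_sum, Finset.mul_sum]
      refine Finset.sum_congr rfl fun k _ => ?_
      rw [smul_eq_mul]; ring
    rw [hbary, hval] at jensen
    exact jensen
  · -- right inequality
    cases m with
    | zero =>
      have hq' : q ≠ 0 := ne_of_gt hq0
      have hbq : b - b * q ≠ 0 := by nlinarith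
      have h1 : b * q ^ (0+1) / q = b := by rw [zero_add, pow_one]; field_simp
      rw [h1, Finset.sum_range_one, pow_zero, mul_one, mul_one, zero_add, pow_one]
      apply le_of_eq
      field_simp
      ring
    | succ p =>
      have hqp : q ^ (p+1) < 1 := pow_lt_one₀ hq0.le hq1 (Nat.succ_ne_zero p)
      have hE : (0:ℝ) < 1 - q ^ (p+1) := by linarith
      have hu : b * q ^ (p+1+1) / q = b * q ^ (p+1) := by
        rw [pow_succ]; field_simp
      rw [hu]
      set u := b * q ^ (p+1) with hu_def
      -- pointwise bound
      have hpt : ∀ k ∈ Finset.range (p+1+1),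
          f (b * q ^ k) * q ^ k ≤
            (((1 - q ^ k) / (1 - q ^ (p+1))) * f u
              + ((q ^ k - q ^ (p+1)) / (1 - q ^ (p+1))) * f b) * q ^ k := by
        intro k hk
        have hk' : k ≤ p + 1 := Nat.lt_succ_iff.mp (Finset.mem_range.mp hk)
        have hqk1 : q ^ k ≤ 1 := pow_le_one₀ hq0.le hq1.le
        have hqkp : q ^ (p+1) ≤ q ^ k := pow_le_pow_of_le_one hq0.le hq1.le hk'
        have hl0 : 0 ≤ (1 - q ^ k) / (1 - q ^ (p+1)) := div_nonneg (by linarith) hE.le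
        have hm0 : 0 ≤ (q ^ k - q ^ (p+1)) / (1 - q ^ (p+1)) := by
          apply div_nonneg (by linarith) hE.le
        have hsum1 : (1 - q ^ k) / (1 - q ^ (p+1)) + (q ^ k - q ^ (p+1)) / (1 - q ^ (p+1)) = 1 := by
          field_simp
          ring
        have humem : u ∈ Icc (b * q ^ (p+1+1)) b := by
          constructor
          · rw [hu_def, pow_succ]
            nlinarith [mul_pos hb (pow_pos hq0 (p+1))]
          · rw [hu_def]
            nlinarith [(pow_le_one₀ hq0.le hq1.le : q ^ (p+1) ≤ 1), pow_pos hq0 (p+1)]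
        have hbmem : b ∈ Icc (b * q ^ (p+1+1)) b :=
          ⟨by nlinarith [(pow_le_one₀ hq0.le hq1.le : q ^ (p+1+1) ≤ 1),
              pow_pos hq0 (p+1+1)], le_refl b⟩
        have key := hconv.2 humem hbmem hl0 hm0 hsum1
        have hcomb : ((1 - q ^ k) / (1 - q ^ (p+1))) • u
            + ((q ^ k - q ^ (p+1)) / (1 - q ^ (p+1))) • b = b * q ^ k := by
          rw [smul_eq_mul, smul_eq_mul, hu_def]
          field_simp
          ring
        rw [hcomb, smul_eq_mul, smul_eq_mul] at key
        exact mul_le_mul_of_nonneg_right key (pow_nonneg hq0.le k)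
      have hsum_le := Finset.sum_le_sum hpt
      -- closed form for upper sum
      have hclosed : ∑ k ∈ Finset.range (p+1+1),
          (((1 - q ^ k) / (1 - q ^ (p+1))) * f u
            + ((q ^ k - q ^ (p+1)) / (1 - q ^ (p+1))) * f b) * q ^ k
          = ((f u - q ^ (p+1) * f b) / (1 - q ^ (p+1)))
              * ∑ k ∈ Finset.range (p+1+1), q ^ k
            + ((f b - f u) / (1 - q ^ (p+1)))
              * ∑ k ∈ Finset.range (p+1+1), (q^2) ^ k := by
        rw [Finset.mul_sum, Finset.mul_sum, ← Finset.sum_add_distrib]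
        refine Finset.sum_congr rfl fun k _ => ?_
        have h2 : (q^2) ^ k = q ^ k * q ^ k := by rw [pow_right_comm]; ring
        rw [h2]
        field_simp
        ring
      have hS1' : ∑ k ∈ Finset.range (p+1+1), q ^ k = (q ^ (p+1+1) - 1) / (q - 1) := hS1
      have hS2' : ∑ k ∈ Finset.range (p+1+1), (q^2) ^ k = ((q^2) ^ (p+1+1) - 1) / (q^2 - 1) := hS2
      -- final: combine
      have hfinal : (1 / (b - b * q ^ (p+1+1))) * (b * (1 - q) *
          (((f u - q ^ (p+1) * f b) / (1 - q ^ (p+1)))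
              * ((q ^ (p+1+1) - 1) / (q - 1))
            + ((f b - f u) / (1 - q ^ (p+1)))
              * (((q^2) ^ (p+1+1) - 1) / (q^2 - 1))))
          = (1 / (1 + q)) * (q * f u + f b) := by
        have hpow : (q^2) ^ (p+1+1) = q ^ (p+1+1) * q ^ (p+1+1) := by
          rw [pow_right_comm]; ring
        set X := q ^ (p+1) with hX
        have hXq : q ^ (p+1+1) = X * q := by rw [pow_succ]
        have hX2 : (q^2) ^ (p+1+1) = X * q * (X * q) := by rw [hpow, hXq]
        rw [hXq, hX2]
        have hDX : b - b * (X * q) ≠ 0 := by rw [← hXq]; exact ne_of_gt hD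
        have hEX : (1:ℝ) - X ≠ 0 := ne_of_gt hE
        have hqX : (1:ℝ) - q * X ≠ 0 := by intro h; apply hDX; linear_combination b * h
        have hqX' : (1:ℝ) - X * q ≠ 0 := by intro h; apply hDX; linear_combination b * h
        field_simp [hDX, hEX, hqne, hq2ne, h1q.ne', hqX, hqX']
        ring
      calc (1 / (b - b * q ^ (p+1+1))) * (b * (1 - q) *
              ∑ k ∈ Finset.range (p+1+1), f (b * q ^ k) * q ^ k)
          ≤ (1 / (b - b * q ^ (p+1+1))) * (b * (1 - q) *
              ∑ k ∈ Finset.range (p+1+1),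
                (((1 - q ^ k) / (1 - q ^ (p+1))) * f u
                  + ((q ^ k - q ^ (p+1)) / (1 - q ^ (p+1))) * f b) * q ^ k) := by
            apply mul_le_mul_of_nonneg_left _ (by positivity)
            exact mul_le_mul_of_nonneg_left hsum_le (by positivity)
        _ = (1 / (1 + q)) * (q * f u + f b) := by
            rw [hclosed, hS1', hS2', hfinal]
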